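/- For every real ϑ with 1 < ϑ < (2 + √32)/7 and every real C ≥ 0, there exist a real ε > 0 and reals X, Y with 0 < X ≤ Y such that (2/ϑ − 1 − ε)·X > (ϑ − 1)·Y + C and (2 + 2ϑ − 3ϑ²)·Y ≥ (2 + 3ϑ·(1 + εϑ))·X + C. -/

import Mathlib

/-- Solvability of the two linear inequalities in `X` (for `T₂`) and `Y`
(for `T_active`) from the proof of Lemma 4.12, for drift `ϑ < (2+√32)/7`. -/
theorem timeout_inequalities_solvable (ϑ : ℝ) (h1 : 1 < ϑ)
    (h2 : ϑ < (2 + Real.sqrt 32) / 7) (C : ℝ) (hC : 0 ≤ C) :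
    ∃ ε X Y : ℝ, 0 < ε ∧ 0 < X ∧ X ≤ Y ∧
      (2 / ϑ - 1 - ε) * X > (ϑ - 1) * Y + C ∧
      (2 + 2 * ϑ - 3 * ϑ ^ 2) * Y ≥ (2 + 3 * ϑ * (1 + ε * ϑ)) * X + C := by
  have hϑ0 : (0:ℝ) < ϑ := by linarith
  -- From h2: 7ϑ - 2 < √32, hence (7ϑ-2)² < 32
  have hs : 7 * ϑ - 2 < Real.sqrt 32 := by linarith
  have hsq : (7 * ϑ - 2) ^ 2 < 32 := by
    have h32 : Real.sqrt 32 ^ 2 = 32 := Real.sq_sqrt (by norm_num)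
    nlinarith [Real.sqrt_nonneg (32:ℝ)]
  set D : ℝ := 4 + 4 * ϑ - 7 * ϑ ^ 2 with hDdef
  have hD : 0 < D := by nlinarith
  set A : ℝ := 2 + 2 * ϑ - 3 * ϑ ^ 2 with hAdef
  have hA : 0 < A := by nlinarith
  set E : ℝ := ϑ * A + 3 * ϑ ^ 3 * (ϑ - 1) with hEdef
  have hE : 0 < E := by
    have : 0 < ϑ * A := mul_pos hϑ0 hA
    nlinarith
  set ε : ℝ := D / (2 * E) with hεdef
  have hε : 0 < ε := div_pos hD (by linarith)
  set X : ℝ := 2 * ϑ * C * (A + ϑ - 1) / D + 1 with hXdef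
  have hX : 0 < X := by
    have h0 : 0 ≤ 2 * ϑ * C * (A + ϑ - 1) / D := by
      apply div_nonneg _ (le_of_lt hD)
      have : 0 ≤ A + ϑ - 1 := by linarith
      positivity
    rw [hXdef]; linarith
  set Y : ℝ := ((2 + 3 * ϑ * (1 + ε * ϑ)) * X + C) / A with hYdef
  have hAne : A ≠ 0 := ne_of_gt hA
  have hϑne : ϑ ≠ 0 := ne_of_gt hϑ0
  have hEne : E ≠ 0 := ne_of_gt hE
  have hDne : D ≠ 0 := ne_of_gt hD
  have hAY : A * Y = (2 + 3 * ϑ * (1 + ε * ϑ)) * X + C := by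
    rw [hYdef]; field_simp
  refine ⟨ε, X, Y, hε, hX, ?_, ?_, ?_⟩
  · -- X ≤ Y
    have hdiff : Y - X = ((ϑ + 3 * ϑ ^ 2 + 3 * ε * ϑ ^ 2) * X + C) / A := by
      rw [hYdef]; field_simp; ring
    have hnum : 0 ≤ (ϑ + 3 * ϑ ^ 2 + 3 * ε * ϑ ^ 2) * X + C := by
      have : 0 < ϑ + 3 * ϑ ^ 2 + 3 * ε * ϑ ^ 2 := by positivity
      nlinarith
    nlinarith [div_nonneg hnum (le_of_lt hA), hdiff]
  · -- first inequality
    have hεE : ε * E = D / 2 := by rw [hεdef]; field_simp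
    have hdiff : (2 / ϑ - 1 - ε) * X - ((ϑ - 1) * Y + C)
        = ((D - ε * E) * X - ϑ * C * (A + ϑ - 1)) / (ϑ * A) := by
      rw [hYdef]; field_simp; ring
    have hkey : 0 < (D - ε * E) * X - ϑ * C * (A + ϑ - 1) := by
      rw [hεE]
      have hXval : (D / 2) * X = ϑ * C * (A + ϑ - 1) + D / 2 := by
        rw [hXdef]; field_simp
      nlinarith
    have := div_pos hkey (mul_pos hϑ0 hA)
    linarith [hdiff ▸ this]
  · -- second inequality
    rw [ge_iff_le, ← hAY]
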